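/- Let R be a Boolean ring and a = Σ_{i≥0} a_i x^i ∈ R[x]. Then a lies in the set {b - b^2·x : b ∈ R[x]} if and only if, for every i ≥ 0, the (finite) sum Σ_{j≥0} a_{(2i+1)·2^j - 1} equals 0 in R. -/

import Mathlib

open Polynomial Finset

section BooleanAux
variable {R : Type*} [CommRing R]


lemma myTwo (hB : ∀ r : R, r ^ 2 = r) : (2 : R) = 0 := by linear_combination hB 2

lemma mySq (hB : ∀ r : R, r ^ 2 = r) (b : R[X]) : b ^ 2 = Polynomial.expand R 2 b := by
  induction b using Polynomial.induction_on' with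
  | add p q hp hq =>
      have h2 : (2 : R[X]) = 0 := by
        have : ((2:R[X])) = C (2:R) := by norm_cast
        rw [this, myTwo hB, map_zero]
      rw [map_add]
      linear_combination hp + hq + (p*q) * h2
  | monomial n r =>
      rw [Polynomial.expand_monomial, monomial_pow]
      rw [hB r]

lemma mySqCoeff (hB : ∀ r : R, r ^ 2 = r) (b : R[X]) (n : ℕ) :
    (b ^ 2).coeff n = if 2 ∣ n then b.coeff (n / 2) else 0 := by
  rw [mySq hB, Polynomial.coeff_expand (by norm_num)]

lemma myMulXCoeff (b : R[X]) (n : ℕ) :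
    (b * X).coeff n = if n = 0 then 0 else b.coeff (n - 1) := by
  cases n with
  | zero => simp
  | succ m => simp [Polynomial.coeff_mul_X]

def bc (a : R[X]) : ℕ → R := fun n =>
  if h : n % 2 = 1 then a.coeff n + bc a ((n - 1) / 2) else a.coeff n
decreasing_by omega

lemma bc_even (a : R[X]) {n : ℕ} (h : n % 2 = 0) : bc a n = a.coeff n := by
  rw [bc]; simp [h]

lemma bc_odd (a : R[X]) {n : ℕ} (h : n % 2 = 1) :
    bc a n = a.coeff n + bc a ((n - 1) / 2) := by
  rw [bc]; simp [h]

lemma chain_arith (i j : ℕ) :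
    ((2 * i + 1) * 2 ^ (j + 1) - 1) % 2 = 1 ∧
      ((2 * i + 1) * 2 ^ (j + 1) - 1 - 1) / 2 = (2 * i + 1) * 2 ^ j - 1 := by
  have hM : 1 ≤ (2 * i + 1) * 2 ^ j := Nat.one_le_iff_ne_zero.2 (by positivity)
  have h2 : (2 * i + 1) * 2 ^ (j + 1) = 2 * ((2 * i + 1) * 2 ^ j) := by ring
  omega

lemma bc_chain (a : R[X]) (i : ℕ) : ∀ j : ℕ,
    bc a ((2 * i + 1) * 2 ^ j - 1) =
      ∑ s ∈ Finset.range (j + 1), a.coeff ((2 * i + 1) * 2 ^ s - 1) := by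
  intro j
  induction j with
  | zero =>
      rw [bc_even a (by omega : ((2 * i + 1) * 2 ^ 0 - 1) % 2 = 0)]
      simp
  | succ j ih =>
      obtain ⟨h1, h2⟩ := chain_arith i j
      rw [bc_odd a h1, h2, ih, Finset.sum_range_succ _ (j + 1), add_comm]

lemma idx_mono {i : ℕ} : StrictMono (fun j => (2 * i + 1) * 2 ^ j - 1) := by
  intro s t hst
  have h1 : (2 * i + 1) * 2 ^ s < (2 * i + 1) * 2 ^ t :=
    mul_lt_mul_of_pos_left (Nat.pow_lt_pow_right (by norm_num) hst) (by omega)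
  have h2 : 1 ≤ (2 * i + 1) * 2 ^ s := Nat.one_le_iff_ne_zero.2 (by positivity)
  show (2 * i + 1) * 2 ^ s - 1 < (2 * i + 1) * 2 ^ t - 1
  omega

lemma idx_ge {i j : ℕ} : j ≤ (2 * i + 1) * 2 ^ j - 1 := by
  have h1 : 2 ^ j ≤ (2 * i + 1) * 2 ^ j := Nat.le_mul_of_pos_left _ (by omega)
  have h2 : j < 2 ^ j := Nat.lt_two_pow_self
  omega

lemma exists_rep (n : ℕ) : ∃ i t, n = (2 * i + 1) * 2 ^ t - 1 := by
  obtain ⟨t, m, hm, hnm⟩ := Nat.exists_eq_pow_mul_and_not_dvd (n := n + 1) (by omega) 2 (by norm_num)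
  have hm' : m % 2 = 1 := by omega
  refine ⟨m / 2, t, ?_⟩
  have : (2 * (m / 2) + 1) = m := by omega
  rw [this, mul_comm]
  omega

lemma bc_vanish (a : R[X])
    (H : ∀ i : ℕ, ∑ᶠ j : ℕ, a.coeff ((2 * i + 1) * 2 ^ j - 1) = 0)
    {n : ℕ} (hn : a.natDegree < n) : bc a n = 0 := by
  obtain ⟨i, t, rfl⟩ := exists_rep n
  rw [bc_chain]
  have hsub : Function.support (fun j => a.coeff ((2 * i + 1) * 2 ^ j - 1)) ⊆
      ↑(Finset.range (t + 1)) := by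
    intro s hs
    simp only [Finset.coe_range, Set.mem_Iio]
    by_contra hst
    push_neg at hst
    apply hs
    apply Polynomial.coeff_eq_zero_of_natDegree_lt
    calc a.natDegree < (2 * i + 1) * 2 ^ t - 1 := hn
      _ ≤ (2 * i + 1) * 2 ^ s - 1 := (idx_mono.le_iff_le).2 (by omega)
  rw [← finsum_eq_sum_of_support_subset _ hsub, H]

lemma coeff_b (a : R[X])
    (H : ∀ i : ℕ, ∑ᶠ j : ℕ, a.coeff ((2 * i + 1) * 2 ^ j - 1) = 0) (k : ℕ) :
    (∑ n ∈ Finset.range (a.natDegree + 1), monomial n (bc a n)).coeff k = bc a k := by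
  rw [Polynomial.finset_sum_coeff]
  simp only [Polynomial.coeff_monomial]
  rw [Finset.sum_ite_eq' (Finset.range _) k]
  split
  · rfl
  · next hk =>
      symm
      exact bc_vanish a H (by simp only [Finset.mem_range] at hk; omega)

theorem stmt_4' (hB : ∀ r : R, r ^ 2 = r) (a : R[X]) :
    (∃ b : R[X], a = b - b ^ 2 * X) ↔
      (∀ i : ℕ, ∑ᶠ j : ℕ, a.coeff ((2 * i + 1) * 2 ^ j - 1) = 0) := by
  constructor
  · rintro ⟨b, rfl⟩ i
    set f : ℕ → R := fun j => (b - b ^ 2 * X).coeff ((2 * i + 1) * 2 ^ j - 1) with hf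
    have key : ∀ J : ℕ, ∑ s ∈ Finset.range (J + 1), f s = b.coeff ((2 * i + 1) * 2 ^ J - 1) := by
      intro J
      induction J with
      | zero =>
          have h0 : (2 * i + 1) * 2 ^ 0 - 1 = 2 * i := by norm_num
          rw [Finset.sum_range_one]
          simp only [hf, h0, Polynomial.coeff_sub, myMulXCoeff, mySqCoeff hB]
          rcases Nat.eq_zero_or_pos i with hi | hi
          · subst hi; simp
          · have : ¬ (2 * i = 0) := by omega
            rw [if_neg this, if_neg (by omega), sub_zero]
      | succ J ih =>
          obtain ⟨h1, h2⟩ := chain_arith i J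
          rw [Finset.sum_range_succ, ih]
          have hne : (2 * i + 1) * 2 ^ (J + 1) - 1 ≠ 0 := by omega
          have hdvd : 2 ∣ ((2 * i + 1) * 2 ^ (J + 1) - 1 - 1) := by omega
          simp only [hf, Polynomial.coeff_sub, myMulXCoeff, mySqCoeff hB, if_neg hne,
            if_pos hdvd, h2]
          ring
    set N := (b - b ^ 2 * X).natDegree + b.natDegree + 1 with hN
    have hsub : Function.support f ⊆ ↑(Finset.range (N + 1)) := by
      intro s hs
      simp only [Finset.coe_range, Set.mem_Iio]
      by_contra hst
      push_neg at hst
      apply hs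
      apply Polynomial.coeff_eq_zero_of_natDegree_lt
      have := @idx_ge i s
      omega
    rw [finsum_eq_sum_of_support_subset _ hsub, key N]
    apply Polynomial.coeff_eq_zero_of_natDegree_lt
    have := @idx_ge i N
    omega
  · intro H
    refine ⟨∑ n ∈ Finset.range (a.natDegree + 1), monomial n (bc a n), ?_⟩
    ext n
    rw [Polynomial.coeff_sub, coeff_b a H, myMulXCoeff, mySqCoeff hB]
    rcases Nat.eq_zero_or_pos n with hn | hn
    · subst hn
      rw [if_pos rfl, bc_even a (by omega), sub_zero]
    rcases Nat.mod_two_eq_zero_or_one n with he | ho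
    · have h2 : ¬ (2 ∣ (n - 1)) := by omega
      rw [if_neg (by omega), if_neg h2, bc_even a (by omega), sub_zero]
    · have hodd : n % 2 = 1 := by omega
      have h2 : 2 ∣ (n - 1) := by omega
      rw [if_neg (by omega), if_pos h2, coeff_b a H, bc_odd a hodd]
      ring

end BooleanAux

open Polynomial

/-- Let `R` be a Boolean ring and `a = Σ_{i≥0} a_i x^i ∈ R[x]`. Then `a` lies in the
set `{b - b^2·x : b ∈ R[x]}` if and only if, for every `i ≥ 0`, the (finite) sum
`Σ_{j≥0} a_{(2i+1)·2^j - 1}` equals `0` in `R`. -/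
theorem stmt_4 (R : Type*) [CommRing R] (hB : ∀ r : R, r ^ 2 = r) (a : R[X]) :
    (∃ b : R[X], a = b - b ^ 2 * X) ↔
      (∀ i : ℕ, ∑ᶠ j : ℕ, a.coeff ((2 * i + 1) * 2 ^ j - 1) = 0) := by
  exact stmt_4' hB a
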